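/- Let N be a normal subgroup of a direct product S_1 × ⋯ × S_{n-1} of nonabelian finite simple groups such that the quotient is isomorphic to a nonabelian finite simple group S_n. Then N = T_1 × ⋯ × T_{n-1} where each T_i is either trivial or S_i, and there is exactly one index k with T_k trivial and S_k ≅ S_n. -/

import Mathlib

/-- Let `N` be a normal subgroup of a direct product `S_1 × ⋯ × S_m` of nonabelian
finite simple groups such that the quotient is isomorphic to a nonabelian finite
simple group `S'`. Then `N = T_1 × ⋯ × T_m` where each `T_i` is trivial or all of
`S_i`, and there is exactly one index `k` with `T_k` trivial; moreover `S_k ≅ S'`. -/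
theorem normal_subgroup_of_product_with_simple_quotient
    (m : ℕ) (S : Fin m → Type*) [∀ i, Group (S i)] [∀ i, Finite (S i)]
    (hsimple : ∀ i, IsSimpleGroup (S i))
    (hnonab : ∀ i, ¬ ∀ a b : S i, a * b = b * a)
    (S' : Type*) [Group S'] [Finite S'] (hsimple' : IsSimpleGroup S')
    (hnonab' : ¬ ∀ a b : S', a * b = b * a)
    (N : Subgroup (∀ i, S i)) (hN : N.Normal)
    (hquot : Nonempty ((∀ i, S i) ⧸ N ≃* S')) :
    ∃ T : ∀ i, Subgroup (S i), N = Subgroup.pi Set.univ T ∧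
      (∀ i, T i = ⊥ ∨ T i = ⊤) ∧
      ∃! k : Fin m, T k = ⊥ ∧
        (∀ i, i ≠ k → T i = ⊤) ∧ Nonempty (S k ≃* S') := by
  classical
  haveI := hN
  obtain ⟨e⟩ := hquot
  -- Key lemma: if N has an element with nontrivial i-th coordinate, the whole
  -- i-th factor lies in N.
  have keyA : ∀ i : Fin m, (∃ n ∈ N, n i ≠ 1) → ∀ s : S i, Pi.mulSingle i s ∈ N := by
    intro i ⟨n, hnN, hni⟩
    set K : Subgroup (S i) := N.comap (MonoidHom.mulSingle S i) with hK
    have hKnormal : K.Normal := hN.comap _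
    -- n i is not central
    have hnc : ∃ s : S i, s * n i ≠ n i * s := by
      by_contra h
      push_neg at h
      have hmem : n i ∈ Subgroup.center (S i) := Subgroup.mem_center_iff.mpr h
      rcases (Subgroup.center (S i)).normal_of_characteristic.eq_bot_or_eq_top with hc | hc
      · rw [hc, Subgroup.mem_bot] at hmem; exact hni hmem
      · exact hnonab i fun a b => by
          have : b ∈ Subgroup.center (S i) := hc ▸ Subgroup.mem_top b
          exact (Subgroup.mem_center_iff.mp this a)
    obtain ⟨s, hs⟩ := hnc
    -- the commutator of n with mulSingle i s
    have hc1 : n * Pi.mulSingle i s * n⁻¹ * (Pi.mulSingle i s)⁻¹ ∈ N := by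
      have : Pi.mulSingle i s * n⁻¹ * (Pi.mulSingle i s)⁻¹ ∈ N :=
        hN.conj_mem _ (N.inv_mem hnN) _
      have := N.mul_mem hnN this
      simpa [mul_assoc] using this
    have hceq : n * Pi.mulSingle i s * n⁻¹ * (Pi.mulSingle i s)⁻¹
        = Pi.mulSingle i (n i * s * (n i)⁻¹ * s⁻¹) := by
      funext j
      by_cases hj : j = i
      · subst hj; simp
      · simp [Pi.mulSingle_eq_of_ne hj]
    have hcmem : (n i * s * (n i)⁻¹ * s⁻¹) ∈ K := by
      rw [hK, Subgroup.mem_comap]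
      simpa [MonoidHom.mulSingle_apply, ← hceq] using hc1
    have hcne : n i * s * (n i)⁻¹ * s⁻¹ ≠ 1 := by
      intro h
      rw [mul_inv_eq_one, mul_inv_eq_iff_eq_mul] at h
      exact hs h.symm
    have hKne : K ≠ ⊥ := by
      intro h
      rw [h, Subgroup.mem_bot] at hcmem
      exact hcne hcmem
    have hKtop : K = ⊤ := ((hsimple i).eq_bot_or_eq_top_of_normal K hKnormal).resolve_left hKne
    intro s'
    have : s' ∈ K := hKtop ▸ Subgroup.mem_top s'
    simpa [hK, Subgroup.mem_comap, MonoidHom.mulSingle_apply] using this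
  set T : ∀ i, Subgroup (S i) :=
    fun i => if ∀ n ∈ N, n i = 1 then ⊥ else ⊤ with hT
  have hbt : ∀ i : Fin m, (⊥ : Subgroup (S i)) ≠ ⊤ := by
    intro i h
    haveI := (hsimple i).toNontrivial
    obtain ⟨a, ha⟩ := exists_ne (1 : S i)
    exact ha (by rw [← Subgroup.mem_bot, h]; exact Subgroup.mem_top a)
  have hTb : ∀ i, (∀ n ∈ N, n i = 1) → T i = ⊥ := by
    intro i h; simp only [hT]; exact if_pos h
  have hTt : ∀ i, ¬(∀ n ∈ N, n i = 1) → T i = ⊤ := by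
    intro i h; simp only [hT]; exact if_neg h
  have hTbt : ∀ i, T i = ⊥ ∨ T i = ⊤ := by
    intro i; by_cases h : ∀ n ∈ N, n i = 1
    · exact Or.inl (hTb i h)
    · exact Or.inr (hTt i h)
  have hTbot : ∀ i, T i = ⊥ → ∀ n ∈ N, n i = 1 := by
    intro i h
    by_contra hh
    exact hbt i (h ▸ hTt i hh)
  -- N = pi univ T
  have hNeq : N = Subgroup.pi Set.univ T := by
    apply le_antisymm
    · intro x hx
      rw [Subgroup.mem_pi]
      intro i _
      by_cases h : ∀ n ∈ N, n i = 1
      · rw [hTb i h, Subgroup.mem_bot]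
        exact h x hx
      · rw [hTt i h]; exact Subgroup.mem_top _
    · intro x hx
      rw [Subgroup.mem_pi] at hx
      apply Subgroup.pi_mem_of_mulSingle_mem
      intro i
      by_cases h : ∀ n ∈ N, n i = 1
      · have : x i = 1 := by
          have := hx i (Set.mem_univ i)
          rwa [hTb i h, Subgroup.mem_bot] at this
        rw [this, Pi.mulSingle_one]
        exact N.one_mem
      · push_neg at h
        exact keyA i h (x i)
  -- the quotient is isomorphic to the product over indices with T i = ⊥
  set ι₀ := {i : Fin m // T i = ⊥} with hι₀
  set φ : (∀ i, S i) →* (∀ j : ι₀, S j.1) :=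
    Pi.monoidHom (fun j => Pi.evalMonoidHom S j.1) with hφ
  have hφsurj : Function.Surjective φ := by
    intro y
    refine ⟨fun i => if h : T i = ⊥ then y ⟨i, h⟩ else 1, ?_⟩
    funext j
    simp [hφ, Pi.monoidHom, Pi.evalMonoidHom, j.2]
    rfl
  have hker : φ.ker = N := by
    rw [hNeq]
    ext x
    rw [MonoidHom.mem_ker, Subgroup.mem_pi]
    constructor
    · intro h i _
      rcases hTbt i with hb | ht
      · rw [hb, Subgroup.mem_bot]
        have := congrFun h ⟨i, hb⟩
        simpa [hφ, Pi.monoidHom, Pi.evalMonoidHom] using this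
      · rw [ht]; exact Subgroup.mem_top _
    · intro h
      funext j
      have := h j.1 (Set.mem_univ j.1)
      rw [j.2, Subgroup.mem_bot] at this
      simpa [hφ, Pi.monoidHom, Pi.evalMonoidHom] using this
  have e' : ((∀ i, S i) ⧸ N) ≃* (∀ j : ι₀, S j.1) :=
    (QuotientGroup.quotientMulEquivOfEq hker.symm).trans
      (QuotientGroup.quotientKerEquivOfSurjective φ hφsurj)
  have f : S' ≃* (∀ j : ι₀, S j.1) := e.symm.trans e'
  -- ι₀ is nonempty
  have hne : Nonempty ι₀ := by
    by_contra h
    rw [not_nonempty_iff] at h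
    have hsub : Subsingleton (∀ j : ι₀, S j.1) := ⟨fun a b => funext fun j => (h.false j).elim⟩
    have : Subsingleton S' := f.toEquiv.subsingleton_congr.mpr hsub
    exact absurd (hsimple'.toNontrivial) (not_nontrivial_iff_subsingleton.mpr this)
  -- ι₀ is a subsingleton
  have hss : Subsingleton ι₀ := by
    by_contra h
    rw [not_subsingleton_iff_nontrivial] at h
    obtain ⟨j₁, j₂, hjj⟩ := h
    haveI : Nontrivial (∀ j : ι₀, S j.1) := f.symm.toEquiv.nontrivial
    have hsimpleP : IsSimpleGroup (∀ j : ι₀, S j.1) :=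
      IsSimpleGroup.isSimpleGroup_of_surjective f.toMonoidHom f.surjective
    set K := (Pi.evalMonoidHom (fun j : ι₀ => S j.1) j₁).ker with hKdef
    have hKnormal : K.Normal := MonoidHom.normal_ker _
    haveI := (hsimple j₂.1).toNontrivial
    obtain ⟨s, hs⟩ := exists_ne (1 : S j₂.1)
    have hmem : (Pi.mulSingle j₂ s : ∀ j : ι₀, S j.1) ∈ K := by
      rw [hKdef, MonoidHom.mem_ker]
      exact @Pi.mulSingle_eq_of_ne ι₀ (fun j => S j.1) _ _ j₂ j₁ hjj s
    have hKne : K ≠ ⊥ := by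
      intro h
      rw [h, Subgroup.mem_bot] at hmem
      apply hs
      have := congrFun hmem j₂
      simpa using this
    have hKnt : K ≠ ⊤ := by
      intro h
      haveI := (hsimple j₁.1).toNontrivial
      obtain ⟨t, ht⟩ := exists_ne (1 : S j₁.1)
      have : (Pi.mulSingle j₁ t : ∀ j : ι₀, S j.1) ∈ K := h ▸ Subgroup.mem_top _
      rw [hKdef, MonoidHom.mem_ker] at this
      simp [Pi.evalMonoidHom] at this
      exact ht this
    rcases hsimpleP.eq_bot_or_eq_top_of_normal K hKnormal with h | h
    · exact hKne h
    · exact hKnt h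
  obtain ⟨k0⟩ := hne
  haveI : Unique ι₀ := ⟨⟨k0⟩, fun a => Subsingleton.elim a k0⟩
  have fk : S' ≃* S (default : ι₀).1 := f.trans (MulEquiv.piUnique (fun j : ι₀ => S j.1))
  refine ⟨T, hNeq, hTbt, (default : ι₀).1, ⟨(default : ι₀).2, ?_, ⟨fk.symm⟩⟩, ?_⟩
  · intro i hi
    rcases hTbt i with hb | ht
    · exact absurd (congrArg Subtype.val (Subsingleton.elim (⟨i, hb⟩ : ι₀) default)) hi
    · exact ht
  · intro k' ⟨hb, _, _⟩
    exact congrArg Subtype.val (Subsingleton.elim (⟨k', hb⟩ : ι₀) default)
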